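/- arXiv:1212.1351 — 5 statements merged into one kernel-verified Lean document; each statement's English description precedes it below -/
import Mathlib

section
/- Let B be the 3×3 integer matrix with rows (0,2,−2), (−2,0,2), (2,−2,0), and let v = (1,−1,0). Suppose (v_i)_{i∈S} is a finite family of nonzero integer vectors lying in the plane {(x,y,z) : x+y+z = 0}, none of which is a nonnegative scalar multiple of v. If c and (c_i)_{i∈S} are integers such that c·v + ∑_{i∈S} c_i v_i is a B-coherent linear relation over ℤ, then c = 0. -/
open scoped BigOperators

/-- Matrix mutation `μ_k`. -/
def matMut (k : Fin 3) (C : Matrix (Fin 3) (Fin 3) ℤ) : Matrix (Fin 3) (Fin 3) ℤ :=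
  Matrix.of fun i j =>
    if i = k ∨ j = k then -C i j
    else C i j + Int.sign (C k j) * max (C i k * C k j) 0

/-- The mutation map `η_k^C : ℝ³ → ℝ³`. -/
noncomputable def etaMap (C : Matrix (Fin 3) (Fin 3) ℤ) (k : Fin 3) (a : Fin 3 → ℝ) :
    Fin 3 → ℝ := fun j =>
  if j = k then -a k
  else if 0 ≤ a k ∧ 0 ≤ C k j then a j + a k * (C k j : ℝ)
  else if a k ≤ 0 ∧ C k j ≤ 0 then a j - a k * (C k j : ℝ)
  else a j

/-- The mutation map for a finite sequence of indices; the list records the order of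
application, so `etaList C [k₁, …, k_q] = η_{k_q} ∘ ⋯ ∘ η_{k₁}`, where the matrix is
mutated along the way. -/
noncomputable def etaList (C : Matrix (Fin 3) (Fin 3) ℤ) :
    List (Fin 3) → (Fin 3 → ℝ) → (Fin 3 → ℝ)
  | [] => id
  | k :: ks => fun a => etaList (matMut k C) ks (etaMap C k a)

/-- The exchange matrix `B` of the once-punctured torus. -/
def Bmat : Matrix (Fin 3) (Fin 3) ℤ := !![0, 2, -2; -2, 0, 2; 2, -2, 0]

/-- Componentwise minimum with `0`. -/
noncomputable def minZero (v : Fin 3 → ℝ) : Fin 3 → ℝ := fun j => min (v j) 0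

/-- The formal expression `∑ i ∈ S, c i • v i` is a `C`-coherent linear relation. -/
def BCoherent {ι : Type*} (C : Matrix (Fin 3) (Fin 3) ℤ) (S : Finset ι)
    (c : ι → ℝ) (v : ι → Fin 3 → ℝ) : Prop :=
  ∀ ks : List (Fin 3),
    ∑ i ∈ S, c i • etaList C ks (v i) = 0 ∧
    ∑ i ∈ S, c i • minZero (etaList C ks (v i)) = 0

def Bneg : Matrix (Fin 3) (Fin 3) ℤ := !![0, -2, 2; 2, 0, -2; -2, 2, 0]

lemma hM0 : matMut 0 Bmat = Bneg := by decide
lemma hM10 : matMut 1 (matMut 0 Bmat) = Bmat := by decide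
lemma hM01 : matMut 0 (matMut 1 Bmat) = Bmat := by decide
lemma hM1 : matMut 1 Bmat = Bneg := by decide

noncomputable def pv (x z : ℤ) : Fin 3 → ℝ := ![(x : ℝ), -(x : ℝ) - (z : ℝ), (z : ℝ)]

lemma etaMap_k (C : Matrix (Fin 3) (Fin 3) ℤ) (k : Fin 3) (a : Fin 3 → ℝ) :
    etaMap C k a k = -a k := by simp [etaMap]

lemma etaMap_pos (C : Matrix (Fin 3) (Fin 3) ℤ) (k j : Fin 3) (a : Fin 3 → ℝ)
    (hj : j ≠ k) (h2 : C k j = 2) (hk : 0 ≤ a k) :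
    etaMap C k a j = a j + a k * 2 := by
  simp only [etaMap, if_neg hj, h2]
  rw [if_pos ⟨hk, by norm_num⟩]; norm_num

lemma etaMap_pos' (C : Matrix (Fin 3) (Fin 3) ℤ) (k j : Fin 3) (a : Fin 3 → ℝ)
    (hj : j ≠ k) (h2 : C k j = 2) (hk : a k ≤ 0) :
    etaMap C k a j = a j := by
  simp only [etaMap, if_neg hj, h2]
  split_ifs with h1 h3
  · have : a k = 0 := le_antisymm hk h1.1
    rw [this]; ring
  · exact absurd h3.2 (by norm_num)
  · rfl

lemma etaMap_neg (C : Matrix (Fin 3) (Fin 3) ℤ) (k j : Fin 3) (a : Fin 3 → ℝ)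
    (hj : j ≠ k) (h2 : C k j = -2) (hk : 0 ≤ a k) :
    etaMap C k a j = a j := by
  simp only [etaMap, if_neg hj, h2]
  split_ifs with h1 h3
  · exact absurd h1.2 (by norm_num)
  · have : a k = 0 := le_antisymm h3.1 hk
    rw [this]; push_cast; ring
  · rfl

lemma etaMap_neg' (C : Matrix (Fin 3) (Fin 3) ℤ) (k j : Fin 3) (a : Fin 3 → ℝ)
    (hj : j ≠ k) (h2 : C k j = -2) (hk : a k ≤ 0) :
    etaMap C k a j = a j + a k * 2 := by
  simp only [etaMap, if_neg hj, h2]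
  split_ifs with h1 h3
  · have : a k = 0 := le_antisymm hk h1.1
    rw [this]; push_cast; ring
  · push_cast; ring
  · exact absurd ⟨hk, by norm_num⟩ h3

lemma pv0 (x z : ℤ) : pv x z 0 = (x : ℝ) := rfl
lemma pv1 (x z : ℤ) : pv x z 1 = -(x : ℝ) - (z : ℝ) := rfl
lemma pv2 (x z : ℤ) : pv x z 2 = (z : ℝ) := rfl

lemma pv_ext (x z x' z' : ℤ) (hx : x = x') (hz : z = z') : pv x z = pv x' z' := by
  rw [hx, hz]

lemma eta0B_pos (x z : ℤ) (h : 0 ≤ x) : etaMap Bmat 0 (pv x z) = pv (-x) z := by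
  have hk : 0 ≤ pv x z 0 := by rw [pv0]; exact_mod_cast h
  funext j; fin_cases j
  · show etaMap Bmat 0 (pv x z) 0 = pv (-x) z 0
    rw [etaMap_k, pv0, pv0]; push_cast; ring
  · show etaMap Bmat 0 (pv x z) 1 = pv (-x) z 1
    rw [etaMap_pos Bmat 0 1 (pv x z) (by decide) (by decide) hk, pv1, pv0, pv1]
    push_cast; ring
  · show etaMap Bmat 0 (pv x z) 2 = pv (-x) z 2
    rw [etaMap_neg Bmat 0 2 (pv x z) (by decide) (by decide) hk, pv2, pv2]

lemma eta0B_neg (x z : ℤ) (h : x ≤ 0) : etaMap Bmat 0 (pv x z) = pv (-x) (z + 2*x) := by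
  have hk : pv x z 0 ≤ 0 := by rw [pv0]; exact_mod_cast h
  funext j; fin_cases j
  · show etaMap Bmat 0 (pv x z) 0 = pv (-x) (z + 2*x) 0
    rw [etaMap_k, pv0, pv0]; push_cast; ring
  · show etaMap Bmat 0 (pv x z) 1 = pv (-x) (z + 2*x) 1
    rw [etaMap_pos' Bmat 0 1 (pv x z) (by decide) (by decide) hk, pv1, pv1]
    push_cast; ring
  · show etaMap Bmat 0 (pv x z) 2 = pv (-x) (z + 2*x) 2
    rw [etaMap_neg' Bmat 0 2 (pv x z) (by decide) (by decide) hk, pv2, pv0, pv2]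
    push_cast; ring

lemma eta1N_pos (x z : ℤ) (h : x + z ≤ 0) : etaMap Bneg 1 (pv x z) = pv (-x - 2*z) z := by
  have hk : 0 ≤ pv x z 1 := by rw [pv1]; push_cast; linarith [(by exact_mod_cast h : (x:ℝ) + z ≤ 0)]
  funext j; fin_cases j
  · show etaMap Bneg 1 (pv x z) 0 = pv (-x - 2*z) z 0
    rw [etaMap_pos Bneg 1 0 (pv x z) (by decide) (by decide) hk, pv0, pv1, pv0]
    push_cast; ring
  · show etaMap Bneg 1 (pv x z) 1 = pv (-x - 2*z) z 1
    rw [etaMap_k, pv1, pv1]; push_cast; ring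
  · show etaMap Bneg 1 (pv x z) 2 = pv (-x - 2*z) z 2
    rw [etaMap_neg Bneg 1 2 (pv x z) (by decide) (by decide) hk, pv2, pv2]

lemma eta1N_neg (x z : ℤ) (h : 0 ≤ x + z) : etaMap Bneg 1 (pv x z) = pv x (-2*x - z) := by
  have hk : pv x z 1 ≤ 0 := by rw [pv1]; push_cast; linarith [(by exact_mod_cast h : (0:ℝ) ≤ (x:ℝ) + z)]
  funext j; fin_cases j
  · show etaMap Bneg 1 (pv x z) 0 = pv x (-2*x - z) 0
    rw [etaMap_pos' Bneg 1 0 (pv x z) (by decide) (by decide) hk, pv0, pv0]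
  · show etaMap Bneg 1 (pv x z) 1 = pv x (-2*x - z) 1
    rw [etaMap_k, pv1, pv1]; push_cast; ring
  · show etaMap Bneg 1 (pv x z) 2 = pv x (-2*x - z) 2
    rw [etaMap_neg' Bneg 1 2 (pv x z) (by decide) (by decide) hk, pv2, pv1, pv2]
    push_cast; ring

lemma eta1B_pos (x z : ℤ) (h : x + z ≤ 0) : etaMap Bmat 1 (pv x z) = pv x (-2*x - z) := by
  have hk : 0 ≤ pv x z 1 := by rw [pv1]; push_cast; linarith [(by exact_mod_cast h : (x:ℝ) + z ≤ 0)]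
  funext j; fin_cases j
  · show etaMap Bmat 1 (pv x z) 0 = pv x (-2*x - z) 0
    rw [etaMap_neg Bmat 1 0 (pv x z) (by decide) (by decide) hk, pv0, pv0]
  · show etaMap Bmat 1 (pv x z) 1 = pv x (-2*x - z) 1
    rw [etaMap_k, pv1, pv1]; push_cast; ring
  · show etaMap Bmat 1 (pv x z) 2 = pv x (-2*x - z) 2
    rw [etaMap_pos Bmat 1 2 (pv x z) (by decide) (by decide) hk, pv2, pv1, pv2]
    push_cast; ring

lemma eta1B_neg (x z : ℤ) (h : 0 ≤ x + z) : etaMap Bmat 1 (pv x z) = pv (-x - 2*z) z := by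
  have hk : pv x z 1 ≤ 0 := by rw [pv1]; push_cast; linarith [(by exact_mod_cast h : (0:ℝ) ≤ (x:ℝ) + z)]
  funext j; fin_cases j
  · show etaMap Bmat 1 (pv x z) 0 = pv (-x - 2*z) z 0
    rw [etaMap_neg' Bmat 1 0 (pv x z) (by decide) (by decide) hk, pv0, pv1, pv0]
    push_cast; ring
  · show etaMap Bmat 1 (pv x z) 1 = pv (-x - 2*z) z 1
    rw [etaMap_k, pv1, pv1]; push_cast; ring
  · show etaMap Bmat 1 (pv x z) 2 = pv (-x - 2*z) z 2
    rw [etaMap_pos' Bmat 1 2 (pv x z) (by decide) (by decide) hk, pv2, pv2]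

lemma eta0N_pos (x z : ℤ) (h : 0 ≤ x) : etaMap Bneg 0 (pv x z) = pv (-x) (z + 2*x) := by
  have hk : 0 ≤ pv x z 0 := by rw [pv0]; exact_mod_cast h
  funext j; fin_cases j
  · show etaMap Bneg 0 (pv x z) 0 = pv (-x) (z + 2*x) 0
    rw [etaMap_k, pv0, pv0]; push_cast; ring
  · show etaMap Bneg 0 (pv x z) 1 = pv (-x) (z + 2*x) 1
    rw [etaMap_neg Bneg 0 1 (pv x z) (by decide) (by decide) hk, pv1, pv1]
    push_cast; ring
  · show etaMap Bneg 0 (pv x z) 2 = pv (-x) (z + 2*x) 2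
    rw [etaMap_pos Bneg 0 2 (pv x z) (by decide) (by decide) hk, pv2, pv0, pv2]
    push_cast; ring

lemma eta0N_neg (x z : ℤ) (h : x ≤ 0) : etaMap Bneg 0 (pv x z) = pv (-x) z := by
  have hk : pv x z 0 ≤ 0 := by rw [pv0]; exact_mod_cast h
  funext j; fin_cases j
  · show etaMap Bneg 0 (pv x z) 0 = pv (-x) z 0
    rw [etaMap_k, pv0, pv0]; push_cast; ring
  · show etaMap Bneg 0 (pv x z) 1 = pv (-x) z 1
    rw [etaMap_neg' Bneg 0 1 (pv x z) (by decide) (by decide) hk, pv1, pv0, pv1]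
    push_cast; ring
  · show etaMap Bneg 0 (pv x z) 2 = pv (-x) z 2
    rw [etaMap_pos' Bneg 0 2 (pv x z) (by decide) (by decide) hk, pv2, pv2]

def phi (p : ℤ × ℤ) : ℤ × ℤ :=
  if 0 ≤ p.1 then
    (if p.2 ≤ p.1 then (p.1 - 2*p.2, p.2) else (-p.1, 2*p.1 - p.2))
  else
    (if p.1 + p.2 ≤ 0 then (-3*p.1 - 2*p.2, 2*p.1 + p.2) else (-p.1, -p.2))

def phi' (p : ℤ × ℤ) : ℤ × ℤ :=
  if p.1 + p.2 ≤ 0 then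
    (if 0 ≤ p.1 then (-p.1, -p.2) else (-p.1, -2*p.1 - p.2))
  else
    (if p.1 + 2*p.2 ≤ 0 then (p.1 + 2*p.2, -2*p.1 - 3*p.2) else (p.1 + 2*p.2, p.2))

lemma stepA (x z : ℤ) :
    etaList Bmat [0, 1] (pv x z) = pv (phi (x, z)).1 (phi (x, z)).2 := by
  have hexp : etaList Bmat [0, 1] (pv x z)
      = etaMap (matMut 0 Bmat) 1 (etaMap Bmat 0 (pv x z)) := rfl
  rw [hexp, hM0]
  by_cases hx : 0 ≤ x
  · rw [eta0B_pos x z hx]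
    by_cases hzx : z ≤ x
    · rw [eta1N_pos (-x) z (by omega)]
      simp only [phi, if_pos hx, if_pos hzx]
      exact pv_ext _ _ _ _ (by ring) rfl
    · rw [eta1N_neg (-x) z (by omega)]
      simp only [phi, if_pos hx, if_neg hzx]
      exact pv_ext _ _ _ _ (by ring) (by ring)
  · rw [eta0B_neg x z (by omega)]
    by_cases hxz : x + z ≤ 0
    · rw [eta1N_pos (-x) (z + 2*x) (by omega)]
      simp only [phi, if_neg hx, if_pos hxz]
      exact pv_ext _ _ _ _ (by ring) (by ring)
    · rw [eta1N_neg (-x) (z + 2*x) (by omega)]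
      simp only [phi, if_neg hx, if_neg hxz]
      exact pv_ext _ _ _ _ (by ring) (by ring)

lemma stepB (x z : ℤ) :
    etaList Bmat [1, 0] (pv x z) = pv (phi' (x, z)).1 (phi' (x, z)).2 := by
  have hexp : etaList Bmat [1, 0] (pv x z)
      = etaMap (matMut 1 Bmat) 0 (etaMap Bmat 1 (pv x z)) := rfl
  rw [hexp, hM1]
  by_cases hxz : x + z ≤ 0
  · rw [eta1B_pos x z hxz]
    by_cases hx : 0 ≤ x
    · rw [eta0N_pos x (-2*x - z) hx]
      simp only [phi', if_pos hxz, if_pos hx]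
      exact pv_ext _ _ _ _ rfl (by ring)
    · rw [eta0N_neg x (-2*x - z) (by omega)]
      simp only [phi', if_pos hxz, if_neg hx]
  · rw [eta1B_neg x z (by omega)]
    by_cases h2 : x + 2*z ≤ 0
    · rw [eta0N_pos (-x - 2*z) z (by omega)]
      simp only [phi', if_neg hxz, if_pos h2]
      exact pv_ext _ _ _ _ (by ring) (by ring)
    · rw [eta0N_neg (-x - 2*z) z (by omega)]
      simp only [phi', if_neg hxz, if_neg h2]
      exact pv_ext _ _ _ _ (by ring) rfl

lemma phi'_phi (p : ℤ × ℤ) : phi' (phi p) = p := by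
  obtain ⟨x, z⟩ := p
  by_cases hx : 0 ≤ x
  · by_cases hzx : z ≤ x
    · have h1 : phi (x, z) = (x - 2*z, z) := by simp [phi, hx, hzx]
      rw [h1]; simp only [phi']; split_ifs <;> simp only [Prod.mk.injEq, and_true, true_and] <;> omega
    · have h1 : phi (x, z) = (-x, 2*x - z) := by simp [phi, hx, hzx]
      rw [h1]; simp only [phi']; split_ifs <;> simp only [Prod.mk.injEq, and_true, true_and] <;> omega
  · by_cases hxz : x + z ≤ 0
    · have h1 : phi (x, z) = (-3*x - 2*z, 2*x + z) := by simp [phi, hx, hxz]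
      rw [h1]; simp only [phi']; split_ifs <;> simp only [Prod.mk.injEq, and_true, true_and] <;> omega
    · have h1 : phi (x, z) = (-x, -z) := by simp [phi, hx, hxz]
      rw [h1]; simp only [phi']; split_ifs <;> simp only [Prod.mk.injEq, and_true, true_and] <;> omega

/-- The list `[0,1,0,1,…]` with `n` blocks. -/
def LA : ℕ → List (Fin 3)
  | 0 => []
  | n + 1 => 0 :: 1 :: LA n

/-- The list `[1,0,1,0,…]` with `n` blocks. -/
def LB : ℕ → List (Fin 3)
  | 0 => []
  | n + 1 => 1 :: 0 :: LB n

lemma etaLA (n : ℕ) (x z : ℤ) :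
    etaList Bmat (LA n) (pv x z) = pv (phi^[n] (x, z)).1 (phi^[n] (x, z)).2 := by
  induction n generalizing x z with
  | zero => rfl
  | succ n ih =>
    have hexp : etaList Bmat (LA (n+1)) (pv x z)
        = etaList (matMut 1 (matMut 0 Bmat)) (LA n)
            (etaMap (matMut 0 Bmat) 1 (etaMap Bmat 0 (pv x z))) := rfl
    rw [hexp, hM10]
    have h2 : etaMap (matMut 0 Bmat) 1 (etaMap Bmat 0 (pv x z))
        = pv (phi (x, z)).1 (phi (x, z)).2 := by
      exact stepA x z
    rw [h2, ih]
    rw [Function.iterate_succ_apply]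

lemma etaLB (n : ℕ) (x z : ℤ) :
    etaList Bmat (LB n) (pv x z) = pv (phi'^[n] (x, z)).1 (phi'^[n] (x, z)).2 := by
  induction n generalizing x z with
  | zero => rfl
  | succ n ih =>
    have hexp : etaList Bmat (LB (n+1)) (pv x z)
        = etaList (matMut 0 (matMut 1 Bmat)) (LB n)
            (etaMap (matMut 1 Bmat) 0 (etaMap Bmat 1 (pv x z))) := rfl
    rw [hexp, hM01]
    have h2 : etaMap (matMut 1 Bmat) 0 (etaMap Bmat 1 (pv x z))
        = pv (phi' (x, z)).1 (phi' (x, z)).2 := by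
      exact stepB x z
    rw [h2, ih]
    rw [Function.iterate_succ_apply]

/-- Forward stability: once in the region `x ≥ 0, z ≤ -1`, `phi` is a translation. -/
lemma fwd (A t : ℤ) (hA : 0 ≤ A) (ht : 1 ≤ t) :
    ∀ m : ℕ, phi^[m] (A, -t) = (A + 2*t*m, -t) := by
  intro m
  induction m with
  | zero => simp
  | succ m ih =>
    rw [Function.iterate_succ_apply', ih]
    have h1 : phi (A + 2*t*(m:ℤ), -t) = (A + 2*t*(m+1:ℕ), -t) := by
      simp only [phi]
      rw [if_pos (by positivity), if_pos (by nlinarith [Int.natCast_nonneg m])]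
      push_cast
      simp only [Prod.mk.injEq]
      exact ⟨by ring, trivial⟩
    exact h1

/-- Backward stability for `phi'` in the region `x + t ≥ 0, z = t ≥ 1`. -/
lemma phi'_step (Y t : ℤ) (ht : 1 ≤ t) (hY : 0 ≤ Y + t) :
    phi' (Y, t) = (Y + 2*t, t) := by
  simp only [phi']
  split_ifs <;> simp only [Prod.mk.injEq] <;> constructor <;> omega

lemma fwd' (X t : ℤ) (ht : 1 ≤ t) (hX : 0 ≤ X + t) :
    ∀ m : ℕ, phi'^[m] (X, t) = (X + 2*t*m, t) := by
  intro m
  induction m with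
  | zero => simp
  | succ m ih =>
    rw [Function.iterate_succ_apply', ih]
    have hm : (0:ℤ) ≤ 2*t*(m:ℤ) := by positivity
    rw [phi'_step (X + 2*t*(m:ℤ)) t ht (by omega)]
    simp only [Prod.mk.injEq]
    push_cast
    exact ⟨by ring, trivial⟩

lemma phi_eval (x z : ℤ) :
    phi (x, z) = if 0 ≤ x then (if z ≤ x then (x - 2*z, z) else (-x, 2*x - z))
      else (if x + z ≤ 0 then (-3*x - 2*z, 2*x + z) else (-x, -z)) := rfl

lemma phi'_eval (x z : ℤ) :
    phi' (x, z) = if x + z ≤ 0 then (if 0 ≤ x then (-x, -z) else (-x, -2*x - z))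
      else (if x + 2*z ≤ 0 then (x + 2*z, -2*x - 3*z) else (x + 2*z, z)) := rfl

lemma reach_base (x z : ℤ) (h : ¬(z = 0 ∧ 0 ≤ x)) (hside : ¬(0 ≤ x ∧ 1 ≤ z ∧ z ≤ x)) :
    ∃ (N : ℕ) (A t : ℤ), 0 ≤ A ∧ 1 ≤ t ∧ phi^[N] (x, z) = (A, -t) := by
  by_cases hx : 0 ≤ x
  · by_cases hz : z ≤ -1
    · exact ⟨0, x, -z, hx, by omega, by simp⟩
    · have hz1 : 1 ≤ z := by omega
      have hxz : x < z := by omega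
      by_cases hx0 : x = 0
      · subst hx0
        have h1 : phi (0, z) = (0, -z) := by
          rw [phi_eval, if_pos le_rfl, if_neg (by omega)]
          simp
        exact ⟨1, 0, z, le_refl _, hz1, by simpa [h1]⟩
      · have h1 : phi (x, z) = (-x, 2*x - z) := by
          rw [phi_eval, if_pos hx, if_neg (by omega)]
        have h2 : phi (-x, 2*x - z) = (2*z - x, -z) := by
          rw [phi_eval, if_neg (by omega), if_pos (by omega)]
          simp only [Prod.mk.injEq]
          constructor <;> ring
        refine ⟨2, 2*z - x, z, by omega, hz1, ?_⟩
        rw [show (2:ℕ) = 1 + 1 by rfl, Function.iterate_add_apply]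
        simp only [Function.iterate_one]
        rw [h1, h2]
  · by_cases hxz : x + z ≤ 0
    · have h1 : phi (x, z) = (-3*x - 2*z, 2*x + z) := by
        rw [phi_eval, if_neg hx, if_pos hxz]
      refine ⟨1, -3*x - 2*z, -(2*x + z), by omega, by omega, ?_⟩
      simp only [Function.iterate_one, h1, neg_neg]
    · have h1 : phi (x, z) = (-x, -z) := by
        rw [phi_eval, if_neg hx, if_neg hxz]
      refine ⟨1, -x, z, by omega, by omega, ?_⟩
      simp only [Function.iterate_one, h1]

lemma reach_aux : ∀ (n : ℕ) (x z : ℤ), x.toNat ≤ n → ¬(z = 0 ∧ 0 ≤ x) →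
    ∃ (N : ℕ) (A t : ℤ), 0 ≤ A ∧ 1 ≤ t ∧ phi^[N] (x, z) = (A, -t) := by
  intro n
  induction n with
  | zero =>
    intro x z hxn h
    refine reach_base x z h ?_
    rintro ⟨h1, h2, h3⟩
    omega
  | succ n ih =>
    intro x z hxn h
    by_cases hside : 0 ≤ x ∧ 1 ≤ z ∧ z ≤ x
    · obtain ⟨hx, hz, hzx⟩ := hside
      have h1 : phi (x, z) = (x - 2*z, z) := by
        rw [phi_eval, if_pos hx, if_pos hzx]
      obtain ⟨N, A, t, hA, ht, hN⟩ := ih (x - 2*z) z (by omega) (by omega)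
      refine ⟨N + 1, A, t, hA, ht, ?_⟩
      rw [Function.iterate_succ_apply, h1, hN]
    · exact reach_base x z h hside

lemma reach (x z : ℤ) (h : ¬(z = 0 ∧ 0 ≤ x)) :
    ∃ (N : ℕ) (A t : ℤ), 0 ≤ A ∧ 1 ≤ t ∧ phi^[N] (x, z) = (A, -t) :=
  reach_aux x.toNat x z le_rfl h

lemma bwd_aux : ∀ (n : ℕ) (A t : ℤ), A.toNat ≤ n → 0 ≤ A → 1 ≤ t →
    ∃ M : ℕ, ∀ m : ℕ, M ≤ m → phi'^[m] (A, -t) = (-A - 2*t + 2*t*m, t) := by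
  have base : ∀ (A t : ℤ), 0 ≤ A → 1 ≤ t → A ≤ 2*t →
      ∃ M : ℕ, ∀ m : ℕ, M ≤ m → phi'^[m] (A, -t) = (-A - 2*t + 2*t*m, t) := by
    intro A t hA ht hA2
    by_cases hAt : A ≤ t
    · have h1 : phi' (A, -t) = (-A, t) := by
        rw [phi'_eval, if_pos (by omega), if_pos hA]
        simp
      refine ⟨1, fun m hm => ?_⟩
      obtain ⟨k, rfl⟩ := Nat.exists_eq_add_of_le hm
      rw [Nat.add_comm, Function.iterate_succ_apply, h1,
        fwd' (-A) t ht (by omega) k]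
      simp only [Prod.mk.injEq]
      push_cast
      exact ⟨by ring, trivial⟩
    · have h1 : phi' (A, -t) = (A - 2*t, -2*A + 3*t) := by
        rw [phi'_eval, if_neg (by omega), if_pos (by omega)]
        simp only [Prod.mk.injEq]
        constructor <;> ring
      have h2 : phi' (A - 2*t, -2*A + 3*t) = (2*t - A, t) := by
        rw [phi'_eval]
        split_ifs <;> simp only [Prod.mk.injEq] <;> constructor <;> omega
      refine ⟨2, fun m hm => ?_⟩
      obtain ⟨k, rfl⟩ := Nat.exists_eq_add_of_le hm
      rw [Nat.add_comm, show k + 2 = (k + 1) + 1 by rfl,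
        Function.iterate_succ_apply, h1, Function.iterate_succ_apply, h2,
        fwd' (2*t - A) t ht (by omega) k]
      simp only [Prod.mk.injEq]
      push_cast
      exact ⟨by ring, trivial⟩
  intro n
  induction n with
  | zero =>
    intro A t hAn hA ht
    exact base A t hA ht (by omega)
  | succ n ih =>
    intro A t hAn hA ht
    by_cases hA2 : A ≤ 2*t
    · exact base A t hA ht hA2
    · have h1 : phi' (A, -t) = (A - 2*t, -t) := by
        rw [phi'_eval, if_neg (by omega), if_neg (by omega)]
        simp only [Prod.mk.injEq]
        exact ⟨by ring, trivial⟩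
      obtain ⟨M, hM⟩ := ih (A - 2*t) t (by omega) (by omega) ht
      refine ⟨M + 1, fun m hm => ?_⟩
      obtain ⟨k, hk⟩ := Nat.exists_eq_add_of_le hm
      have hk' : m = k + (M + 1) := by omega
      subst hk'
      rw [show k + (M + 1) = (k + M) + 1 by ring, Function.iterate_succ_apply, h1,
        hM (k + M) (by omega)]
      simp only [Prod.mk.injEq]
      push_cast
      exact ⟨by ring, trivial⟩

lemma bwd (A t : ℤ) (hA : 0 ≤ A) (ht : 1 ≤ t) :
    ∃ M : ℕ, ∀ m : ℕ, M ≤ m → phi'^[m] (A, -t) = (-A - 2*t + 2*t*m, t) :=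
  bwd_aux A.toNat A t le_rfl hA ht

lemma phi'_iter_phi_iter : ∀ (N : ℕ) (p : ℤ × ℤ), phi'^[N] (phi^[N] p) = p := by
  intro N
  induction N with
  | zero => intro p; rfl
  | succ N ih =>
    intro p
    rw [Function.iterate_succ_apply' phi', Function.iterate_succ_apply phi, ih (phi p),
      phi'_phi]

lemma master (x z : ℤ) (h : ¬(z = 0 ∧ 0 ≤ x)) :
    ∃ (a t : ℤ) (M : ℕ), ∀ n : ℕ, M ≤ n →
      phi^[n] (x, z) = (a + 2*t*n, -t) ∧ phi'^[n] (x, z) = (-a - 2*t + 2*t*n, t) := by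
  obtain ⟨N, A, t, hA, ht, hN⟩ := reach x z h
  obtain ⟨M₀, hM₀⟩ := bwd A t hA ht
  refine ⟨A - 2*t*N, t, max N M₀, fun n hn => ?_⟩
  have hNn : N ≤ n := le_trans (le_max_left _ _) hn
  have hM₀n : M₀ ≤ n := le_trans (le_max_right _ _) hn
  constructor
  · obtain ⟨k, rfl⟩ := Nat.exists_eq_add_of_le hNn
    rw [Nat.add_comm, Function.iterate_add_apply, hN, fwd A t hA ht k]
    simp only [Prod.mk.injEq]
    push_cast
    exact ⟨by ring, trivial⟩
  · have hxz : (x, z) = phi'^[N] (A, -t) := by rw [← hN, phi'_iter_phi_iter]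
    rw [hxz, ← Function.iterate_add_apply, hM₀ (n + N) (by omega)]
    simp only [Prod.mk.injEq]
    push_cast
    exact ⟨by ring, trivial⟩

lemma hveq : ![(1:ℝ), -1, 0] = pv 1 0 := by
  funext j; fin_cases j <;> simp [pv]

lemma phi_fix : phi (1, 0) = (1, 0) := by
  rw [phi_eval, if_pos (by omega), if_pos (by omega)]
  norm_num

lemma phi'_fix : phi' (1, 0) = (1, 0) := by
  rw [phi'_eval, if_neg (by omega), if_neg (by omega)]
  norm_num

lemma etaLA_v (n : ℕ) : etaList Bmat (LA n) ![(1:ℝ), -1, 0] = ![(1:ℝ), -1, 0] := by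
  rw [hveq, etaLA, Function.iterate_fixed phi_fix]

lemma etaLB_v (n : ℕ) : etaList Bmat (LB n) ![(1:ℝ), -1, 0] = ![(1:ℝ), -1, 0] := by
  rw [hveq, etaLB, Function.iterate_fixed phi'_fix]


/-- If `c • (1,-1,0) + ∑ cᵢ • vᵢ` is a `B`-coherent linear relation, where the `vᵢ` are
nonzero integer vectors in the plane `x+y+z = 0`, none a nonnegative multiple of
`(1,-1,0)`, then `c = 0`. -/
theorem statement5 {ι : Type} (S : Finset ι) (w : ι → Fin 3 → ℝ)
    (hint : ∀ i ∈ S, ∃ u : Fin 3 → ℤ, w i = fun j => ((u j : ℝ)))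
    (hne : ∀ i ∈ S, w i ≠ 0)
    (hplane : ∀ i ∈ S, w i 0 + w i 1 + w i 2 = 0)
    (hnotv : ∀ i ∈ S, ¬∃ t : ℝ, 0 ≤ t ∧ w i = t • ![(1 : ℝ), -1, 0])
    (c : ℤ) (cc : ι → ℤ)
    (hrel : ∀ ks : List (Fin 3),
      ((c : ℝ) • etaList Bmat ks ![(1 : ℝ), -1, 0] +
        ∑ i ∈ S, (cc i : ℝ) • etaList Bmat ks (w i) = 0) ∧
      ((c : ℝ) • minZero (etaList Bmat ks ![(1 : ℝ), -1, 0]) +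
        ∑ i ∈ S, (cc i : ℝ) • minZero (etaList Bmat ks (w i)) = 0)) :
    c = 0 := by
  classical
  have key : ∀ i, ∃ (a t : ℤ) (M : ℕ), i ∈ S → ∀ n : ℕ, M ≤ n →
      etaList Bmat (LA n) (w i) = pv (a + 2*t*n) (-t) ∧
      etaList Bmat (LB n) (w i) = pv (-a - 2*t + 2*t*n) t := by
    intro i
    by_cases hi : i ∈ S
    · obtain ⟨u, hu⟩ := hint i hi
      have hplane' : u 0 + u 1 + u 2 = 0 := by
        have h' := hplane i hi
        rw [hu] at h'
        have h'' : ((u 0 : ℝ)) + u 1 + u 2 = 0 := by simpa using h'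
        exact_mod_cast h''
      have hw : w i = pv (u 0) (u 2) := by
        rw [hu]; funext j; fin_cases j
        · rfl
        · show (u 1 : ℝ) = pv (u 0) (u 2) 1
          rw [pv1]
          have : ((u 0 : ℝ)) + u 1 + u 2 = 0 := by exact_mod_cast hplane'
          linarith
        · rfl
      have hadm : ¬(u 2 = 0 ∧ 0 ≤ u 0) := by
        rintro ⟨h1, h2⟩
        apply hnotv i hi
        refine ⟨(u 0 : ℝ), by exact_mod_cast h2, ?_⟩
        rw [hw]
        funext j; fin_cases j
        · show ((u 0 : ℝ)) = (u 0 : ℝ) * 1; ring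
        · show pv (u 0) (u 2) 1 = (u 0 : ℝ) * (-1)
          rw [pv1, h1]; push_cast; ring
        · show ((u 2 : ℝ)) = (u 0 : ℝ) * 0
          rw [h1]; push_cast; ring
      obtain ⟨a, t, M, hM⟩ := master (u 0) (u 2) hadm
      refine ⟨a, t, M, fun _ n hn => ⟨?_, ?_⟩⟩
      · rw [hw, etaLA, (hM n hn).1]
      · rw [hw, etaLB, (hM n hn).2]
    · exact ⟨0, 0, 0, fun hi' => absurd hi' hi⟩
  choose aF tF MF hF using key
  set n : ℕ := S.sup MF with hn
  -- relation along LA n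
  have hA := (hrel (LA n)).1
  rw [etaLA_v n, Finset.sum_congr rfl
    (fun i hi => by rw [(hF i hi n (Finset.le_sup hi)).1] :
      ∀ i ∈ S, (cc i : ℝ) • etaList Bmat (LA n) (w i)
        = (cc i : ℝ) • pv (aF i + 2*tF i*n) (-tF i))] at hA
  have hB := (hrel (LB n)).1
  rw [etaLB_v n, Finset.sum_congr rfl
    (fun i hi => by rw [(hF i hi n (Finset.le_sup hi)).2] :
      ∀ i ∈ S, (cc i : ℝ) • etaList Bmat (LB n) (w i)
        = (cc i : ℝ) • pv (-aF i - 2*tF i + 2*tF i*n) (tF i))] at hB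
  have E1 : (c : ℝ) + ∑ i ∈ S, (cc i : ℝ) * ((aF i + 2*tF i*(n:ℤ) : ℤ) : ℝ) = 0 := by
    have h0 := congrFun hA 0
    simp only [Pi.add_apply, Pi.smul_apply, Finset.sum_apply, smul_eq_mul,
      Pi.zero_apply, pv0] at h0
    simpa using h0
  have E3 : (c : ℝ) + ∑ i ∈ S, (cc i : ℝ) * ((-aF i - 2*tF i + 2*tF i*(n:ℤ) : ℤ) : ℝ) = 0 := by
    have h0 := congrFun hB 0
    simp only [Pi.add_apply, Pi.smul_apply, Finset.sum_apply, smul_eq_mul,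
      Pi.zero_apply, pv0] at h0
    simpa using h0
  have E2 : ∑ i ∈ S, (cc i : ℝ) * ((-tF i : ℤ) : ℝ) = 0 := by
    have h0 := congrFun hA 2
    simp only [Pi.add_apply, Pi.smul_apply, Finset.sum_apply, smul_eq_mul,
      Pi.zero_apply, pv2] at h0
    simpa using h0
  have E13 : ∑ i ∈ S, ((cc i : ℝ) * ((aF i + 2*tF i*(n:ℤ) : ℤ) : ℝ)
        + (cc i : ℝ) * ((-aF i - 2*tF i + 2*tF i*(n:ℤ) : ℤ) : ℝ))
      = ∑ i ∈ S, (2 - 4*(n:ℝ)) * ((cc i : ℝ) * ((-tF i : ℤ) : ℝ)) := by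
    refine Finset.sum_congr rfl (fun i _ => ?_)
    push_cast
    ring
  rw [Finset.sum_add_distrib, ← Finset.mul_sum, E2, mul_zero] at E13
  have hc : (c : ℝ) = 0 := by linarith
  exact_mod_cast hc
end

section
/- If three Farey points in ℤ² are pairwise Farey neighbors, then they do not lie on a common affine line in ℝ² (i.e., they are not collinear). -/
open scoped BigOperators

/-- A Farey point: an integer vector `(a,b)` with `gcd(a,b) = 1`. -/
def FareyPoint (p : ℤ × ℤ) : Prop := Int.gcd p.1 p.2 = 1

/-- Farey neighbors: first coordinates weakly of the same sign, second coordinates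
weakly of the same sign, and `ad - bc = ±1`. -/
def FareyNeighbors (p q : ℤ × ℤ) : Prop :=
  ((0 ≤ p.1 ∧ 0 ≤ q.1) ∨ (p.1 ≤ 0 ∧ q.1 ≤ 0)) ∧
  ((0 ≤ p.2 ∧ 0 ≤ q.2) ∨ (p.2 ≤ 0 ∧ q.2 ≤ 0)) ∧
  (p.1 * q.2 - p.2 * q.1 = 1 ∨ p.1 * q.2 - p.2 * q.1 = -1)

/-- The inclusion of `ℤ²` into `ℝ²`. -/
def toR2 (p : ℤ × ℤ) : ℝ × ℝ := ((p.1 : ℝ), (p.2 : ℝ))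

/-- Three pairwise Farey neighbor Farey points are not collinear. -/
theorem statement9 (p q r : ℤ × ℤ) (hp : FareyPoint p) (hq : FareyPoint q)
    (hr : FareyPoint r) (hpq : FareyNeighbors p q) (hpr : FareyNeighbors p r)
    (hqr : FareyNeighbors q r) :
    ¬Collinear ℝ ({toR2 p, toR2 q, toR2 r} : Set (ℝ × ℝ)) := by
  intro h
  rw [collinear_iff_exists_forall_eq_smul_vadd] at h
  obtain ⟨p₀, v, hv⟩ := h
  obtain ⟨tp, htp⟩ := hv (toR2 p) (by simp)
  obtain ⟨tq, htq⟩ := hv (toR2 q) (by simp)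
  obtain ⟨tr, htr⟩ := hv (toR2 r) (by simp)
  -- cross product of differences vanishes
  have hcross : ((q.1 : ℝ) - p.1) * ((r.2 : ℝ) - p.2)
      - ((q.2 : ℝ) - p.2) * ((r.1 : ℝ) - p.1) = 0 := by
    have h1 : (q.1 : ℝ) - p.1 = (tq - tp) * v.1 := by
      have := congrArg Prod.fst htq
      have := congrArg Prod.fst htp
      simp [toR2, Prod.ext_iff] at htp htq
      obtain ⟨a, b⟩ := htp; obtain ⟨c, d⟩ := htq
      rw [a, c]; ring
    have h2 : (q.2 : ℝ) - p.2 = (tq - tp) * v.2 := by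
      simp [toR2, Prod.ext_iff] at htp htq
      obtain ⟨a, b⟩ := htp; obtain ⟨c, d⟩ := htq
      rw [b, d]; ring
    have h3 : (r.1 : ℝ) - p.1 = (tr - tp) * v.1 := by
      simp [toR2, Prod.ext_iff] at htp htr
      obtain ⟨a, b⟩ := htp; obtain ⟨c, d⟩ := htr
      rw [a, c]; ring
    have h4 : (r.2 : ℝ) - p.2 = (tr - tp) * v.2 := by
      simp [toR2, Prod.ext_iff] at htp htr
      obtain ⟨a, b⟩ := htp; obtain ⟨c, d⟩ := htr
      rw [b, d]; ring
    rw [h1, h2, h3, h4]; ring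
  have hZ : (q.1 - p.1) * (r.2 - p.2) - (q.2 - p.2) * (r.1 - p.1) = 0 := by
    have : ((((q.1 - p.1) * (r.2 - p.2) - (q.2 - p.2) * (r.1 - p.1)) : ℤ) : ℝ) = 0 := by
      push_cast
      linarith [hcross]
    exact_mod_cast this
  have key : (p.1 * q.2 - p.2 * q.1) + (q.1 * r.2 - q.2 * r.1)
      - (p.1 * r.2 - p.2 * r.1) = 0 := by linear_combination hZ
  obtain ⟨_, _, h1⟩ := hpq
  obtain ⟨_, _, h2⟩ := hpr
  obtain ⟨_, _, h3⟩ := hqr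
  rcases h1 with h1 | h1 <;> rcases h2 with h2 | h2 <;> rcases h3 with h3 | h3 <;> omega
end

section
/- Every point (a,b) ∈ ℝ² with b ≥ 1 is contained in some Farey triangle or in some Farey ray. -/
open scoped BigOperators

/-- A Farey triangle: the convex hull of three pairwise Farey neighbor Farey points. -/
def IsFareyTriangle (T : Set (ℝ × ℝ)) : Prop :=
  ∃ p q r : ℤ × ℤ, FareyPoint p ∧ FareyPoint q ∧ FareyPoint r ∧
    FareyNeighbors p q ∧ FareyNeighbors p r ∧ FareyNeighbors q r ∧
    T = convexHull ℝ {toR2 p, toR2 q, toR2 r}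

/-- The Farey ray with vertex the Farey point `p`: the set `{c • p : c ≥ 1}`. -/
def fareyRay (p : ℤ × ℤ) : Set (ℝ × ℝ) := {x | ∃ c : ℝ, 1 ≤ c ∧ x = c • toR2 p}


lemma fareyPoint_of_det {p q : ℤ × ℤ}
    (h : p.1 * q.2 - p.2 * q.1 = 1 ∨ p.1 * q.2 - p.2 * q.1 = -1) : FareyPoint q := by
  rw [FareyPoint, ← Int.isCoprime_iff_gcd_eq_one]
  rcases h with h | h
  · exact ⟨-p.2, p.1, by linear_combination h⟩
  · exact ⟨p.2, -p.1, by linear_combination -h⟩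

lemma fareyNeighbors_symm {p q : ℤ × ℤ} (h : FareyNeighbors p q) : FareyNeighbors q p := by
  obtain ⟨h1, h2, h3⟩ := h
  refine ⟨h1.imp (fun h => ⟨h.2, h.1⟩) (fun h => ⟨h.2, h.1⟩),
          h2.imp (fun h => ⟨h.2, h.1⟩) (fun h => ⟨h.2, h.1⟩), ?_⟩
  rcases h3 with h3 | h3
  · right; linear_combination -h3
  · left; linear_combination -h3

lemma fareyNeighbors_add {p q : ℤ × ℤ} (j : ℤ) (hj : 0 ≤ j) (h : FareyNeighbors p q) :
    FareyNeighbors p (q.1 + j * p.1, q.2 + j * p.2) := by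
  obtain ⟨h1, h2, h3⟩ := h
  refine ⟨?_, ?_, ?_⟩
  · rcases h1 with ⟨ha, hb⟩ | ⟨ha, hb⟩
    · exact Or.inl ⟨ha, add_nonneg hb (mul_nonneg hj ha)⟩
    · exact Or.inr ⟨ha, add_nonpos hb (mul_nonpos_of_nonneg_of_nonpos hj ha)⟩
  · rcases h2 with ⟨ha, hb⟩ | ⟨ha, hb⟩
    · exact Or.inl ⟨ha, add_nonneg hb (mul_nonneg hj ha)⟩
    · exact Or.inr ⟨ha, add_nonpos hb (mul_nonpos_of_nonneg_of_nonpos hj ha)⟩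
  · rcases h3 with h3 | h3
    · left; linear_combination h3
    · right; linear_combination h3

lemma mem_tri {a b c : ℝ × ℝ} {l1 l2 l3 : ℝ} (h1 : 0 ≤ l1) (h2 : 0 ≤ l2) (h3 : 0 ≤ l3)
    (hs : l1 + l2 + l3 = 1) :
    l1 • a + l2 • b + l3 • c ∈ convexHull ℝ ({a, b, c} : Set (ℝ × ℝ)) := by
  have hconv := convex_convexHull ℝ ({a, b, c} : Set (ℝ × ℝ))
  have := hconv.sum_mem (t := (Finset.univ : Finset (Fin 3))) (w := ![l1, l2, l3])
      (z := ![a, b, c]) ?_ ?_ ?_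
  · simpa [Fin.sum_univ_three] using this
  · intro i _; fin_cases i <;> simpa
  · simp [Fin.sum_univ_three, hs]
  · intro i _
    fin_cases i <;> apply subset_convexHull <;> simp

lemma terminal {p q : ℤ × ℤ} (hp : FareyPoint p) (hq : FareyPoint q)
    (hpq : FareyNeighbors p q) {α β : ℝ}
    (hα0 : 0 ≤ α) (hβ0 : 0 ≤ β) (hα1 : α ≤ 1) (hβ1 : β ≤ 1) (hsum : 1 ≤ α + β)
    {x : ℝ × ℝ} (hx : x = α • toR2 p + β • toR2 q) :
    ∃ T : Set (ℝ × ℝ), IsFareyTriangle T ∧ x ∈ T := by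
  set m : ℤ × ℤ := (p.1 + q.1, p.2 + q.2) with hm
  have e1 : (q.1 + 1 * p.1, q.2 + 1 * p.2) = m := by simp [hm, Prod.ext_iff]; constructor <;> ring
  have e2 : (p.1 + 1 * q.1, p.2 + 1 * q.2) = m := by simp [hm, Prod.ext_iff]
  have hpm : FareyNeighbors p m := e1 ▸ fareyNeighbors_add 1 zero_le_one hpq
  have hqm : FareyNeighbors q m := e2 ▸ fareyNeighbors_add 1 zero_le_one (fareyNeighbors_symm hpq)
  have hmpt : FareyPoint m := fareyPoint_of_det hpm.2.2
  refine ⟨convexHull ℝ {toR2 p, toR2 q, toR2 m}, ⟨p, q, m, hp, hq, hmpt, hpq, hpm, hqm, rfl⟩, ?_⟩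
  have hx2 : x = (1 - β) • toR2 p + (1 - α) • toR2 q + (α + β - 1) • toR2 m := by
    rw [hx]
    simp only [toR2, hm, Prod.ext_iff, Prod.fst_add, Prod.snd_add, Prod.smul_fst, Prod.smul_snd,
      smul_eq_mul]
    push_cast
    constructor <;> ring
  rw [hx2]
  exact mem_tri (by linarith) (by linarith) (by linarith) (by ring)

lemma key : ∀ n : ℕ, ∀ p q : ℤ × ℤ, ∀ α β : ℝ, ∀ x : ℝ × ℝ,
    FareyPoint p → FareyPoint q → FareyNeighbors p q →
    0 ≤ α → 0 ≤ β → 1 ≤ α + β →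
    ⌈α⌉ + ⌈β⌉ ≤ (n : ℤ) →
    x = α • toR2 p + β • toR2 q →
    (∃ T : Set (ℝ × ℝ), IsFareyTriangle T ∧ x ∈ T) ∨
    (∃ p' : ℤ × ℤ, FareyPoint p' ∧ x ∈ fareyRay p') := by
  intro n
  induction n with
  | zero =>
    intro p q α β x _ _ _ hα0 hβ0 hsum hn _
    exfalso
    have h1 : (1 : ℝ) ≤ (⌈α⌉ : ℝ) + (⌈β⌉ : ℝ) :=
      le_trans hsum (add_le_add (Int.le_ceil α) (Int.le_ceil β))
    have h2 : (1 : ℤ) ≤ ⌈α⌉ + ⌈β⌉ := by exact_mod_cast h1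
    omega
  | succ n ih =>
    intro p q α β x hp hq hpq hα0 hβ0 hsum hn hx
    by_cases hα1 : α ≤ 1
    · by_cases hβ1 : β ≤ 1
      · exact Or.inl (terminal hp hq hpq hα0 hβ0 hα1 hβ1 hsum hx)
      · push_neg at hβ1
        by_cases hα0' : α = 0
        · refine Or.inr ⟨q, hq, β, le_of_lt hβ1, ?_⟩
          rw [hx, hα0']
          simp
        · have hα0'' : 0 < α := lt_of_le_of_ne hα0 (Ne.symm hα0')
          set j : ℤ := ⌈(β - 1) / α⌉ with hj
          have hj0 : 0 ≤ j := Int.ceil_nonneg (div_nonneg (by linarith) hα0)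
          set r : ℝ := β - (j : ℝ) * α with hr
          have hr1 : r ≤ 1 := by
            have := Int.le_ceil ((β - 1) / α)
            rw [← hj] at this
            have : β - 1 ≤ (j : ℝ) * α := by
              rw [div_le_iff₀ hα0''] at this; linarith
            linarith
          have hr0 : 1 - α ≤ r := by
            have := Int.ceil_lt_add_one ((β - 1) / α)
            rw [← hj] at this
            have : (j : ℝ) * α < β - 1 + α := by
              have h' : (j : ℝ) < (β - 1) / α + 1 := this
              calc (j : ℝ) * α < ((β - 1) / α + 1) * α := by
                    exact mul_lt_mul_of_pos_right h' hα0''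
                _ = β - 1 + α := by field_simp
            linarith
          set m : ℤ × ℤ := (p.1 + j * q.1, p.2 + j * q.2) with hm
          have hqm : FareyNeighbors q m := fareyNeighbors_add j hj0 (fareyNeighbors_symm hpq)
          have hmq : FareyNeighbors m q := fareyNeighbors_symm hqm
          have hmpt : FareyPoint m := fareyPoint_of_det hqm.2.2
          have hx' : x = α • toR2 m + r • toR2 q := by
            rw [hx]
            simp only [toR2, hm, hr, Prod.ext_iff, Prod.fst_add, Prod.snd_add, Prod.smul_fst,
              Prod.smul_snd, smul_eq_mul]
            push_cast
            constructor <;> ring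
          exact Or.inl (terminal hmpt hq hmq (le_of_lt hα0'') (by linarith) hα1 hr1
            (by linarith) hx')
    · push_neg at hα1
      by_cases hβ1 : β ≤ 1
      · by_cases hβ0' : β = 0
        · refine Or.inr ⟨p, hp, α, le_of_lt hα1, ?_⟩
          rw [hx, hβ0']
          simp
        · have hβ0'' : 0 < β := lt_of_le_of_ne hβ0 (Ne.symm hβ0')
          set j : ℤ := ⌈(α - 1) / β⌉ with hj
          have hj0 : 0 ≤ j := Int.ceil_nonneg (div_nonneg (by linarith) hβ0)
          set r : ℝ := α - (j : ℝ) * β with hr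
          have hr1 : r ≤ 1 := by
            have := Int.le_ceil ((α - 1) / β)
            rw [← hj] at this
            have : α - 1 ≤ (j : ℝ) * β := by
              rw [div_le_iff₀ hβ0''] at this; linarith
            linarith
          have hr0 : 1 - β ≤ r := by
            have := Int.ceil_lt_add_one ((α - 1) / β)
            rw [← hj] at this
            have : (j : ℝ) * β < α - 1 + β := by
              have h' : (j : ℝ) < (α - 1) / β + 1 := this
              calc (j : ℝ) * β < ((α - 1) / β + 1) * β := by
                    exact mul_lt_mul_of_pos_right h' hβ0''
                _ = α - 1 + β := by field_simp
            linarith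
          set m : ℤ × ℤ := (q.1 + j * p.1, q.2 + j * p.2) with hm
          have hpm : FareyNeighbors p m := fareyNeighbors_add j hj0 hpq
          have hmpt : FareyPoint m := fareyPoint_of_det hpm.2.2
          have hx' : x = r • toR2 p + β • toR2 m := by
            rw [hx]
            simp only [toR2, hm, hr, Prod.ext_iff, Prod.fst_add, Prod.snd_add, Prod.smul_fst,
              Prod.smul_snd, smul_eq_mul]
            push_cast
            constructor <;> ring
          exact Or.inl (terminal hp hmpt hpm (by linarith) (le_of_lt hβ0'') hr1 hβ1
            (by linarith) hx')
      · push_neg at hβ1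
        set m : ℤ × ℤ := (p.1 + q.1, p.2 + q.2) with hm
        have e1 : (q.1 + 1 * p.1, q.2 + 1 * p.2) = m := by
          simp [hm, Prod.ext_iff]; constructor <;> ring
        have e2 : (p.1 + 1 * q.1, p.2 + 1 * q.2) = m := by simp [hm, Prod.ext_iff]
        have hpm : FareyNeighbors p m := e1 ▸ fareyNeighbors_add 1 zero_le_one hpq
        have hqm : FareyNeighbors q m :=
          e2 ▸ fareyNeighbors_add 1 zero_le_one (fareyNeighbors_symm hpq)
        have hmq : FareyNeighbors m q := fareyNeighbors_symm hqm
        have hmpt : FareyPoint m := fareyPoint_of_det hpm.2.2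
        by_cases hle : β ≤ α
        · have hx' : x = (α - β) • toR2 p + β • toR2 m := by
            rw [hx]
            simp only [toR2, hm, Prod.ext_iff, Prod.fst_add, Prod.snd_add, Prod.smul_fst,
              Prod.smul_snd, smul_eq_mul]
            push_cast
            constructor <;> ring
          have hmeas : ⌈α - β⌉ + ⌈β⌉ ≤ (n : ℤ) := by
            have h1 : ⌈α - β⌉ ≤ ⌈α - 1⌉ := Int.ceil_le_ceil (by linarith)
            rw [Int.ceil_sub_one] at h1
            push_cast at hn ⊢
            omega
          exact ih p m (α - β) β x hp hmpt hpm (by linarith) hβ0 (by linarith) hmeas hx'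
        · push_neg at hle
          have hx' : x = α • toR2 m + (β - α) • toR2 q := by
            rw [hx]
            simp only [toR2, hm, Prod.ext_iff, Prod.fst_add, Prod.snd_add, Prod.smul_fst,
              Prod.smul_snd, smul_eq_mul]
            push_cast
            constructor <;> ring
          have hmeas : ⌈α⌉ + ⌈β - α⌉ ≤ (n : ℤ) := by
            have h1 : ⌈β - α⌉ ≤ ⌈β - 1⌉ := Int.ceil_le_ceil (by linarith)
            rw [Int.ceil_sub_one] at h1
            push_cast at hn ⊢
            omega
          exact ih m q α (β - α) x hmpt hq hmq hα0 (by linarith) (by linarith) hmeas hx'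
/-- Every point of `ℝ²` with second coordinate at least `1` lies in a Farey triangle
or in a Farey ray. -/
theorem statement11 (x : ℝ × ℝ) (h : 1 ≤ x.2) :
    (∃ T : Set (ℝ × ℝ), IsFareyTriangle T ∧ x ∈ T) ∨
    (∃ p : ℤ × ℤ, FareyPoint p ∧ x ∈ fareyRay p) := by
  by_cases hx1 : 0 ≤ x.1
  · refine key (⌈x.2⌉ + ⌈x.1⌉).toNat ((0 : ℤ), (1 : ℤ)) ((1 : ℤ), (0 : ℤ)) x.2 x.1 x
      ?_ ?_ ?_ (by linarith) hx1 (by linarith) (Int.self_le_toNat _) ?_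
    · simp [FareyPoint]
    · simp [FareyPoint]
    · exact ⟨Or.inl ⟨le_refl 0, zero_le_one⟩, Or.inl ⟨zero_le_one, le_refl 0⟩,
        Or.inr (by norm_num)⟩
    · simp only [toR2, Prod.ext_iff, Prod.fst_add, Prod.snd_add, Prod.smul_fst, Prod.smul_snd,
        smul_eq_mul]
      push_cast
      constructor <;> ring
  · push_neg at hx1
    refine key (⌈x.2⌉ + ⌈-x.1⌉).toNat ((0 : ℤ), (1 : ℤ)) ((-1 : ℤ), (0 : ℤ)) x.2 (-x.1) x
      ?_ ?_ ?_ (by linarith) (by linarith) (by linarith)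
      (Int.self_le_toNat _) ?_
    · simp [FareyPoint]
    · simp [FareyPoint]
    · exact ⟨Or.inr ⟨le_refl 0, by norm_num⟩, Or.inl ⟨zero_le_one, le_refl 0⟩,
        Or.inl (by norm_num)⟩
    · simp only [toR2, Prod.ext_iff, Prod.fst_add, Prod.snd_add, Prod.smul_fst, Prod.smul_snd,
        smul_eq_mul]
      push_cast
      constructor <;> ring
end

section
/- Let x < y be real numbers with y irrational. Then there exists a Farey triangle with vertices (a,b), (c,d), (e,f) such that a > 0, c > 0, e ≥ 0, b/a < d/c, x < (b+d)/(a+c) < y, and moreover either e = 0, or both d/c < f/e and y < f/e. -/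
open scoped BigOperators

namespace S13

structure St where
  a : ℤ
  b : ℤ
  e : ℤ
  f : ℤ

/-- Invariant of the Stern–Brocot iteration toward `y`. -/
def Inv (y : ℝ) (s : St) : Prop :=
  0 < s.a ∧ 0 < s.e ∧ s.a * s.f - s.b * s.e = 1 ∧
  ((0 ≤ s.b ∧ 0 ≤ s.f) ∨ (s.b ≤ 0 ∧ s.f ≤ 0)) ∧
  (s.b : ℝ) < (s.a : ℝ) * y ∧ (s.e : ℝ) * y < (s.f : ℝ)

def Lcond (y : ℝ) (s : St) : Prop := ((s.b : ℝ) + (s.f : ℝ)) < ((s.a : ℝ) + (s.e : ℝ)) * y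

open Classical in
noncomputable def step (y : ℝ) (s : St) : St :=
  if Lcond y s then ⟨s.a + s.e, s.b + s.f, s.e, s.f⟩
  else ⟨s.a, s.b, s.a + s.e, s.b + s.f⟩

lemma step_pos {y : ℝ} {s : St} (h : Lcond y s) :
    step y s = ⟨s.a + s.e, s.b + s.f, s.e, s.f⟩ := by
  classical
  rw [step, if_pos h]

lemma step_neg {y : ℝ} {s : St} (h : ¬ Lcond y s) :
    step y s = ⟨s.a, s.b, s.a + s.e, s.b + s.f⟩ := by
  classical
  rw [step, if_neg h]

lemma inv_step {y : ℝ} (hy : Irrational y) {s : St} (hs : Inv y s) : Inv y (step y s) := by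
  obtain ⟨ha, he, hdet, hsgn, hby, hfy⟩ := hs
  by_cases hL : Lcond y s
  · rw [step_pos hL]
    refine ⟨by dsimp; omega, he, by dsimp; push_cast; linarith [hdet], ?_, ?_, hfy⟩
    · rcases hsgn with ⟨h1, h2⟩ | ⟨h1, h2⟩
      · exact Or.inl ⟨by dsimp; omega, h2⟩
      · exact Or.inr ⟨by dsimp; omega, h2⟩
    · dsimp; push_cast; simpa [Lcond] using hL
  · rw [step_neg hL]
    have hle : ((s.a : ℝ) + s.e) * y ≤ (s.b : ℝ) + s.f := not_lt.1 hL
    have hne : ((s.a : ℝ) + s.e) * y ≠ (s.b : ℝ) + s.f := by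
      intro hEq
      have hae : (s.a : ℝ) + s.e ≠ 0 := by
        have : (0 : ℝ) < (s.a : ℝ) + s.e := by
          have := ha; have := he; push_cast; exact_mod_cast (by omega : (0:ℤ) < s.a + s.e)
        linarith
      refine hy ⟨((s.b : ℚ) + s.f) / ((s.a : ℚ) + s.e), ?_⟩
      push_cast
      field_simp
      linarith [hEq]
    refine ⟨ha, by dsimp; omega, by dsimp; push_cast; linarith [hdet], ?_, hby, ?_⟩
    · rcases hsgn with ⟨h1, h2⟩ | ⟨h1, h2⟩
      · exact Or.inl ⟨h1, by dsimp; omega⟩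
      · exact Or.inr ⟨h1, by dsimp; omega⟩
    · dsimp
      push_cast
      exact lt_of_le_of_ne hle hne

lemma inv_iter {y : ℝ} (hy : Irrational y) {s : St} (hs : Inv y s) (k : ℕ) :
    Inv y ((step y)^[k] s) := by
  induction k with
  | zero => simpa using hs
  | succ n ih => rw [Function.iterate_succ_apply']; exact inv_step hy ih

/-- value of the left endpoint -/
noncomputable def q (s : St) : ℝ := (s.b : ℝ) / (s.a : ℝ)

lemma q_mono_step {y : ℝ} {s : St} (hs : Inv y s) : q s ≤ q (step y s) := by
  obtain ⟨ha, he, hdet, -, -, -⟩ := hs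
  have haR : (0 : ℝ) < (s.a : ℝ) := by exact_mod_cast ha
  have haeR : (0 : ℝ) < (s.a : ℝ) + s.e := by
    have : (0:ℤ) < s.a + s.e := by omega
    push_cast
    exact_mod_cast this
  by_cases hL : Lcond y s
  · rw [step_pos hL]
    show (s.b : ℝ) / s.a ≤ ((s.b + s.f : ℤ) : ℝ) / ((s.a + s.e : ℤ) : ℝ)
    rw [div_le_div_iff₀ haR (by push_cast; linarith)]
    push_cast
    have hdR : (s.a : ℝ) * s.f - s.b * s.e = 1 := by exact_mod_cast hdet
    nlinarith [hdR]
  · rw [step_neg hL]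
    exact le_of_eq rfl

lemma q_mono_iter {y : ℝ} (hy : Irrational y) {s : St} (hs : Inv y s) (k : ℕ) :
    q s ≤ q ((step y)^[k] s) := by
  induction k with
  | zero => simp
  | succ n ih =>
      rw [Function.iterate_succ_apply']
      exact ih.trans (q_mono_step (inv_iter hy hs n))

lemma sum_grow_step {y : ℝ} {s : St} (hs : Inv y s) :
    s.a + s.e + 1 ≤ (step y s).a + (step y s).e := by
  obtain ⟨ha, he, -, -, -, -⟩ := hs
  by_cases hL : Lcond y s
  · rw [step_pos hL]; dsimp; omega
  · rw [step_neg hL]; dsimp; omega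

lemma sum_grow_iter {y : ℝ} (hy : Irrational y) {s : St} (hs : Inv y s) (k : ℕ) :
    s.a + s.e + k ≤ ((step y)^[k] s).a + ((step y)^[k] s).e := by
  induction k with
  | zero => simp
  | succ n ih =>
      rw [Function.iterate_succ_apply']
      have := sum_grow_step (inv_iter hy hs n)
      push_cast
      omega

lemma exists_L {y : ℝ} (hy : Irrational y) {s0 : St} (hs0 : Inv y s0) (k : ℕ) :
    ∃ m, k ≤ m ∧ Lcond y ((step y)^[m] s0) := by
  by_contra hA
  push_neg at hA
  set t := (step y)^[k] s0 with ht
  have hInvt : Inv y t := inv_iter hy hs0 k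
  have claim : ∀ j : ℕ, ((step y)^[k+j] s0).a = t.a ∧ ((step y)^[k+j] s0).b = t.b ∧
      t.e + (j : ℤ) ≤ ((step y)^[k+j] s0).e := by
    intro j
    induction j with
    | zero => simp [ht]
    | succ n ih =>
        obtain ⟨ih1, ih2, ih3⟩ := ih
        have hInvn : Inv y ((step y)^[k+n] s0) := inv_iter hy hs0 (k+n)
        have hnotL : ¬ Lcond y ((step y)^[k+n] s0) := hA (k+n) (Nat.le_add_right k n)
        have hstep : (step y)^[k+(n+1)] s0 = step y ((step y)^[k+n] s0) := by
          rw [show k+(n+1) = (k+n)+1 by omega, Function.iterate_succ_apply']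
        rw [hstep, step_neg hnotL]
        refine ⟨by dsimp; omega, by dsimp; omega, ?_⟩
        have := hInvn.1
        dsimp
        push_cast
        omega
  have hD : (0 : ℝ) < (t.a : ℝ) * y - t.b := by
    have := hInvt.2.2.2.2.1
    linarith
  set j : ℕ := ⌈1 / ((t.a : ℝ) * y - t.b)⌉₊ + 1 with hj
  obtain ⟨h1, h2, h3⟩ := claim j
  set u := (step y)^[k+j] s0 with hu
  have hInvu : Inv y u := inv_iter hy hs0 (k+j)
  have hdetu : t.a * u.f - t.b * u.e = 1 := by rw [← h1, ← h2]; exact hInvu.2.2.1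
  have hfy : (u.e : ℝ) * y < u.f := hInvu.2.2.2.2.2
  have hta : (0 : ℝ) < (t.a : ℝ) := by exact_mod_cast hInvt.1
  have hdetR : (t.a : ℝ) * u.f - t.b * u.e = 1 := by exact_mod_cast hdetu
  have hsmall : (u.e : ℝ) * ((t.a : ℝ) * y - t.b) < 1 := by nlinarith
  have hjb : 1 / ((t.a : ℝ) * y - t.b) ≤ (j : ℝ) := by
    refine (Nat.le_ceil _).trans ?_
    exact_mod_cast Nat.le_succ _
  have hje : (j : ℝ) + 1 ≤ (u.e : ℝ) := by
    have hte : (1 : ℤ) ≤ t.e := hInvt.2.1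
    have hz : (1 : ℤ) + (j : ℤ) ≤ u.e := by omega
    have hr : (1 : ℝ) + (j : ℝ) ≤ (u.e : ℝ) := by exact_mod_cast hz
    linarith
  have h1j : (1 : ℝ) ≤ (j : ℝ) * ((t.a : ℝ) * y - t.b) := by
    rw [div_le_iff₀ hD] at hjb
    linarith
  nlinarith

lemma gcd_of_bezout {a b u v : ℤ} (h : u * a + v * b = 1) : Int.gcd a b = 1 :=
  Int.isCoprime_iff_gcd_eq_one.mp ⟨u, v, h⟩

end S13



open S13 in
/-- Main construction: Farey neighbors `(A,B)`, `(E,F)` with positive first coordinates,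
determinant one, `x < B/A`, and the `L`-condition `B+F < (A+E)y`, plus sign info. -/
lemma main_construction (x y : ℝ) (hxy : x < y) (hy : Irrational y) :
    ∃ s : St, 0 < s.a ∧ 0 < s.e ∧ s.a * s.f - s.b * s.e = 1 ∧
      ((0 ≤ s.b ∧ 0 ≤ s.f) ∨ (s.b ≤ 0 ∧ s.f ≤ 0)) ∧
      (s.e : ℝ) * y < (s.f : ℝ) ∧
      x < (s.b : ℝ) / s.a ∧
      ((s.b : ℝ) + s.f) < ((s.a : ℝ) + s.e) * y := by
  classical
  set n : ℤ := ⌊y⌋ with hn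
  have hny : (n : ℝ) < y := lt_of_le_of_ne (Int.floor_le y) (Ne.symm (hy.ne_int n))
  have hyn1 : y < (n : ℝ) + 1 := Int.lt_floor_add_one y
  set s0 : St := ⟨1, n, 1, n + 1⟩ with hs0def
  have hs0 : Inv y s0 := by
    refine ⟨one_pos, one_pos, by dsimp [s0]; ring, ?_, ?_, ?_⟩
    · rcases le_or_gt 0 n with h | h
      · exact Or.inl ⟨h, by dsimp [s0]; omega⟩
      · exact Or.inr ⟨by dsimp [s0]; omega, by dsimp [s0]; omega⟩
    · dsimp [s0]; push_cast; linarith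
    · dsimp [s0]; push_cast; linarith
  obtain ⟨k, hk⟩ := exists_nat_gt (1 / (y - x))
  have hyx : (0 : ℝ) < y - x := by linarith
  have hk2 : 1 / ((k : ℝ) + 2) < y - x := by
    rw [div_lt_iff₀ (by positivity)]
    rw [div_lt_iff₀ hyx] at hk
    nlinarith
  obtain ⟨m, hkm, hLm⟩ := exists_L hy hs0 k
  set s : St := (step y)^[m] s0 with hs
  obtain ⟨haZ, heZ, hdetZ, hsgn, hbay, heyf⟩ : Inv y s := inv_iter hy hs0 m
  have haR : (0 : ℝ) < (s.a : ℝ) := by exact_mod_cast haZ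
  have heR : (0 : ℝ) < (s.e : ℝ) := by exact_mod_cast heZ
  have hdetR : (s.a : ℝ) * s.f - s.b * s.e = 1 := by exact_mod_cast hdetZ
  have haeR : (0 : ℝ) < (s.a : ℝ) + s.e := by linarith
  have hL : ((s.b : ℝ) + s.f) < ((s.a : ℝ) + s.e) * y := hLm
  -- lower bound on a+e
  have hsum : (2 : ℤ) + m ≤ s.a + s.e := by
    have := sum_grow_iter hy hs0 m
    simpa [hs0def] using this
  have hsumR : (m : ℝ) + 2 ≤ (s.a : ℝ) + s.e := by
    have h' : ((2 : ℤ) + (m : ℤ) : ℝ) ≤ ((s.a + s.e : ℤ) : ℝ) := by exact_mod_cast hsum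
    push_cast at h'
    linarith
  have key : ((s.a : ℝ) + s.e) * y < (s.b : ℝ) + s.f + 1 := by
    have he1 : (1 : ℝ) ≤ (s.e : ℝ) := by exact_mod_cast heZ
    have h' : (((s.a : ℝ) + s.e) * y) * s.e < ((s.b : ℝ) + s.f + 1) * s.e := by
      nlinarith
    exact lt_of_mul_lt_mul_right h' heR.le
  -- 1/(a+e) < y - x
  have hfrac : 1 < (y - x) * ((s.a : ℝ) + s.e) := by
    have hmk : (k : ℝ) ≤ (m : ℝ) := by exact_mod_cast hkm
    have h1 : 1 < (y - x) * ((k : ℝ) + 2) := by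
      rw [div_lt_iff₀ (by positivity)] at hk2
      linarith
    nlinarith
  -- x < (b+f)/(a+e)
  have hx1 : x < ((s.b : ℝ) + s.f) / ((s.a : ℝ) + s.e) := by
    rw [lt_div_iff₀ haeR]
    nlinarith
  -- now find a later L-step
  obtain ⟨m', hm'ge, hLm'⟩ := exists_L hy hs0 (m + 1)
  set s1 : St := (step y)^[m + 1] s0 with hs1
  have hs1eq : s1 = ⟨s.a + s.e, s.b + s.f, s.e, s.f⟩ := by
    rw [hs1, Function.iterate_succ_apply', ← hs, step_pos hLm]
  have hq1 : x < q s1 := by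
    rw [hs1eq]
    show x < ((s.b + s.f : ℤ) : ℝ) / ((s.a + s.e : ℤ) : ℝ)
    push_cast
    exact hx1
  set s2 : St := (step y)^[m'] s0 with hs2
  have hs2eq : s2 = (step y)^[m' - (m + 1)] s1 := by
    rw [hs1, ← Function.iterate_add_apply, hs2]
    congr 1
    omega
  have hInv1 : Inv y s1 := inv_iter hy hs0 (m + 1)
  have hq2 : x < q s2 := by
    rw [hs2eq]
    exact hq1.trans_le (q_mono_iter hy hInv1 _)
  obtain ⟨ha2, he2, hdet2, hsgn2, hb2, hf2⟩ : Inv y s2 := inv_iter hy hs0 m'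
  refine ⟨s2, ha2, he2, hdet2, hsgn2, hf2, hq2, hLm'⟩


/-- For real `x < y` with `y` irrational, there is a Farey triangle with vertices
`(a,b)`, `(c,d)`, `(e,f)` such that `a, c > 0`, `e ≥ 0`, `b/a < d/c`,
`x < (b+d)/(a+c) < y`, and either `e = 0` or `d/c < f/e` and `y < f/e`. -/
theorem statement13 (x y : ℝ) (hxy : x < y) (hy : Irrational y) :
    ∃ a b c d e f : ℤ,
      FareyPoint (a, b) ∧ FareyPoint (c, d) ∧ FareyPoint (e, f) ∧
      FareyNeighbors (a, b) (c, d) ∧ FareyNeighbors (a, b) (e, f) ∧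
      FareyNeighbors (c, d) (e, f) ∧
      0 < a ∧ 0 < c ∧ 0 ≤ e ∧
      (b : ℝ) / a < (d : ℝ) / c ∧
      x < ((b : ℝ) + d) / ((a : ℝ) + c) ∧
      ((b : ℝ) + d) / ((a : ℝ) + c) < y ∧
      (e = 0 ∨ ((d : ℝ) / c < (f : ℝ) / e ∧ y < (f : ℝ) / e)) := by
  obtain ⟨s, haZ, heZ, hdetZ, hsgn, heyf, hxq, hL⟩ := main_construction x y hxy hy
  obtain ⟨A, B, E, F⟩ := s
  dsimp at haZ heZ hdetZ hsgn heyf hxq hL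
  have haR : (0 : ℝ) < (A : ℝ) := by exact_mod_cast haZ
  have heR : (0 : ℝ) < (E : ℝ) := by exact_mod_cast heZ
  have haeR : (0 : ℝ) < (A : ℝ) + E := by linarith
  have hdetR : (A : ℝ) * F - B * E = 1 := by exact_mod_cast hdetZ
  refine ⟨A, B, A + E, B + F, E, F, ?_, ?_, ?_, ?_, ?_, ?_, haZ, by omega, heZ.le,
    ?_, ?_, ?_, Or.inr ⟨?_, ?_⟩⟩
  · exact S13.gcd_of_bezout (u := F) (v := -E) (by linarith)
  · exact S13.gcd_of_bezout (u := F) (v := -E) (by ring_nf; linarith)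
  · exact S13.gcd_of_bezout (u := -B) (v := A) (by linarith)
  · -- (A,B) ~ (A+E, B+F)
    refine ⟨Or.inl ⟨by omega, by omega⟩, ?_, Or.inl (by ring_nf; linarith)⟩
    rcases hsgn with ⟨h1, h2⟩ | ⟨h1, h2⟩
    · exact Or.inl ⟨h1, by omega⟩
    · exact Or.inr ⟨h1, by omega⟩
  · -- (A,B) ~ (E,F)
    refine ⟨Or.inl ⟨by omega, by omega⟩, ?_, Or.inl (by linarith)⟩
    rcases hsgn with ⟨h1, h2⟩ | ⟨h1, h2⟩
    · exact Or.inl ⟨h1, h2⟩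
    · exact Or.inr ⟨h1, h2⟩
  · -- (A+E, B+F) ~ (E,F)
    refine ⟨Or.inl ⟨by omega, by omega⟩, ?_, Or.inl (by ring_nf; linarith)⟩
    rcases hsgn with ⟨h1, h2⟩ | ⟨h1, h2⟩
    · exact Or.inl ⟨by omega, h2⟩
    · exact Or.inr ⟨by omega, h2⟩
  · -- B/A < (B+F)/(A+E)
    rw [div_lt_div_iff₀ haR (by push_cast; linarith)]
    push_cast
    nlinarith
  · -- x < (B + (B+F)) / (A + (A+E))
    have h1 : (B : ℝ) / A < ((B : ℝ) + (B + F : ℤ)) / ((A : ℝ) + (A + E : ℤ)) := by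
      rw [div_lt_div_iff₀ haR (by push_cast; linarith)]
      push_cast
      nlinarith
    exact hxq.trans h1
  · -- mediant < y
    have h1 : ((B : ℝ) + (B + F : ℤ)) / ((A : ℝ) + (A + E : ℤ)) <
        ((B : ℝ) + F) / ((A : ℝ) + E) := by
      rw [div_lt_div_iff₀ (by push_cast; linarith) haeR]
      push_cast
      nlinarith
    have h2 : ((B : ℝ) + F) / ((A : ℝ) + E) < y := by
      rw [div_lt_iff₀ haeR]
      linarith
    exact h1.trans h2
  · -- (B+F)/(A+E) < F/E
    rw [div_lt_div_iff₀ (by push_cast; linarith) heR]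
    push_cast
    nlinarith
  · -- y < F/E
    rw [lt_div_iff₀ heR]
    linarith
end

section
/- Let B be the 3×3 integer matrix with rows (0,2,−2), (−2,0,2), (2,−2,0), and let k be the sequence (2,1), so that η_k^B = η_2^{μ_1(B)} ∘ η_1^B. Then η_k^B(1,−1,0) = (1,−1,0), and for every j ∈ ℤ the image of D_j under η_k^B is D_{j+2}. -/
open scoped BigOperators

/-- The set of nonnegative linear combinations of two vectors. -/
def cone2 (u w : Fin 3 → ℝ) : Set (Fin 3 → ℝ) :=
  {x | ∃ s t : ℝ, 0 ≤ s ∧ 0 ≤ t ∧ x = s • u + t • w}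

/-- The cones `D_j` for `j : ℤ`. -/
noncomputable def Dcone (j : ℤ) : Set (Fin 3 → ℝ) :=
  if j = 0 then cone2 ![-1, 0, 1] ![0, 1, -1]
  else if 0 < j then
    cone2 ![(j : ℝ) - 1, -(j : ℝ) + 2, -1] ![(j : ℝ), -(j : ℝ) + 1, -1]
  else cone2 ![-(j : ℝ) - 2, (j : ℝ) + 1, 1] ![-(j : ℝ) - 1, (j : ℝ), 1]

lemma matMut0 : matMut 0 Bmat = !![0,-2,2;2,0,-2;-2,2,0] := by decide

lemma eta_eq (a : Fin 3 → ℝ) :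
    etaList Bmat [0, 1] a = etaMap !![0,-2,2;2,0,-2;-2,2,0] 1 (etaMap Bmat 0 a) := by
  simp [etaList, matMut0]

lemma step1pos (a : Fin 3 → ℝ) (h0 : 0 ≤ a 0) :
    etaMap Bmat 0 a = ![-a 0, a 1 + 2 * a 0, a 2] := by
  funext j
  fin_cases j <;> simp [etaMap, Bmat] <;> (try split_ifs) <;> intros <;> linarith

lemma step1neg (a : Fin 3 → ℝ) (h0 : a 0 ≤ 0) :
    etaMap Bmat 0 a = ![-a 0, a 1, a 2 + 2 * a 0] := by
  funext j
  fin_cases j <;> simp [etaMap, Bmat] <;> (try split_ifs) <;> intros <;> linarith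

lemma step2pos (b : Fin 3 → ℝ) (h1 : 0 ≤ b 1) :
    etaMap !![0,-2,2;2,0,-2;-2,2,0] 1 b = ![b 0 + 2 * b 1, -b 1, b 2] := by
  funext j
  fin_cases j <;> simp [etaMap] <;> (try split_ifs) <;> intros <;> linarith

lemma step2neg (b : Fin 3 → ℝ) (h1 : b 1 ≤ 0) :
    etaMap !![0,-2,2;2,0,-2;-2,2,0] 1 b = ![b 0, -b 1, b 2 + 2 * b 1] := by
  funext j
  fin_cases j <;> simp [etaMap] <;> (try split_ifs) <;> intros <;> linarith

lemma regR1 (a : Fin 3 → ℝ) (h0 : 0 ≤ a 0) (h1 : 0 ≤ a 1 + 2 * a 0) :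
    etaList Bmat [0, 1] a = ![3 * a 0 + 2 * a 1, -(a 1 + 2 * a 0), a 2] := by
  rw [eta_eq, step1pos a h0, step2pos _ (by simpa using h1)]
  funext i; fin_cases i <;> simp <;> ring

lemma regR2 (a : Fin 3 → ℝ) (h0 : 0 ≤ a 0) (h1 : a 1 + 2 * a 0 ≤ 0) :
    etaList Bmat [0, 1] a = ![-a 0, -(a 1 + 2 * a 0), a 2 + 2 * (a 1 + 2 * a 0)] := by
  rw [eta_eq, step1pos a h0, step2neg _ (by simpa using h1)]
  funext i; fin_cases i <;> simp <;> ring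

lemma regR3 (a : Fin 3 → ℝ) (h0 : a 0 ≤ 0) (h1 : 0 ≤ a 1) :
    etaList Bmat [0, 1] a = ![-a 0 + 2 * a 1, -a 1, a 2 + 2 * a 0] := by
  rw [eta_eq, step1neg a h0, step2pos _ (by simpa using h1)]
  funext i; fin_cases i <;> simp <;> ring

lemma regR4 (a : Fin 3 → ℝ) (h0 : a 0 ≤ 0) (h1 : a 1 ≤ 0) :
    etaList Bmat [0, 1] a = ![-a 0, -a 1, a 2 + 2 * a 0 + 2 * a 1] := by
  rw [eta_eq, step1neg a h0, step2neg _ (by simpa using h1)]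
  funext i; fin_cases i <;> simp <;> ring

lemma cone2_comm (u w : Fin 3 → ℝ) : cone2 u w = cone2 w u := by
  ext x
  constructor <;> rintro ⟨s, t, hs, ht, rfl⟩ <;> exact ⟨t, s, ht, hs, (add_comm _ _)⟩

lemma image_cone {u w u' w' : Fin 3 → ℝ}
    (h : ∀ s t : ℝ, 0 ≤ s → 0 ≤ t →
      etaList Bmat [0, 1] (s • u + t • w) = s • u' + t • w') :
    etaList Bmat [0, 1] '' cone2 u w = cone2 u' w' := by
  ext x
  constructor
  · rintro ⟨y, ⟨s, t, hs, ht, rfl⟩, rfl⟩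
    exact ⟨s, t, hs, ht, h s t hs ht⟩
  · rintro ⟨s, t, hs, ht, rfl⟩
    exact ⟨s • u + t • w, ⟨s, t, hs, ht, rfl⟩, h s t hs ht⟩

/-- `η^B_{2,1}` fixes `(1,-1,0)` and takes `D_j` to `D_{j+2}` (indices `1, 2`
correspond to `0, 1 : Fin 3`). -/
theorem statement16 :
    etaList Bmat [0, 1] ![(1 : ℝ), -1, 0] = ![(1 : ℝ), -1, 0] ∧
    ∀ j : ℤ, etaList Bmat [0, 1] '' Dcone j = Dcone (j + 2) := by
  constructor
  · rw [regR1 _ (by norm_num) (by norm_num)]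
    funext i; fin_cases i <;> norm_num <;> rfl
  · intro j
    rcases lt_trichotomy j 0 with hneg | rfl | hpos
    · by_cases h1 : j = -1
      · subst h1
        norm_num [Dcone]
        rw [cone2_comm]
        apply image_cone
        intro s t hs ht
        rw [regR4 _ (by simp; linarith) (by simp; linarith)]
        funext i; fin_cases i <;> simp <;> ring
      · by_cases h2 : j = -2
        · subst h2
          norm_num [Dcone]
          rw [cone2_comm]
          apply image_cone
          intro s t hs ht
          rw [regR2 _ (by simp; linarith) (by simp; linarith)]
          funext i; fin_cases i <;> simp <;> ring
        · have h3 : j ≤ -3 := by omega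
          have h3' : (j : ℝ) ≤ -3 := by exact_mod_cast h3
          rw [Dcone, Dcone, if_neg (by omega : ¬ j = 0),
            if_neg (by omega : ¬ 0 < j), if_neg (by omega : ¬ j + 2 = 0),
            if_neg (by omega : ¬ 0 < j + 2)]
          push_cast
          apply image_cone
          intro s t hs ht
          rw [regR1 _ ?_ ?_]
          · funext i; fin_cases i <;> simp <;> ring
          · have h4 : (0:ℝ) ≤ s * (-(j:ℝ) - 2) := mul_nonneg hs (by linarith)
            have h5 : (0:ℝ) ≤ t * (-(j:ℝ) - 1) := mul_nonneg ht (by linarith)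
            simp; linarith
          · have h4 : (0:ℝ) ≤ s * (-(j:ℝ) - 3) := mul_nonneg hs (by linarith)
            have h5 : (0:ℝ) ≤ t * (-(j:ℝ) - 2) := mul_nonneg ht (by linarith)
            simp; linarith
    · norm_num [Dcone]
      apply image_cone
      intro s t hs ht
      rw [regR3 _ (by simp; linarith) (by simp; linarith)]
      funext i; fin_cases i <;> simp <;> ring
    · have hp : (1:ℝ) ≤ (j:ℝ) := by exact_mod_cast hpos
      rw [Dcone, Dcone, if_neg (by omega : ¬ j = 0), if_pos hpos,
        if_neg (by omega : ¬ j + 2 = 0), if_pos (by omega : 0 < j + 2)]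
      push_cast
      apply image_cone
      intro s t hs ht
      rw [regR1 _ ?_ ?_]
      · funext i; fin_cases i <;> simp <;> ring
      · have h4 : (0:ℝ) ≤ s * ((j:ℝ) - 1) := mul_nonneg hs (by linarith)
        have h5 : (0:ℝ) ≤ t * (j:ℝ) := mul_nonneg ht (by linarith)
        simp; linarith
      · have h4 : (0:ℝ) ≤ s * (j:ℝ) := mul_nonneg hs (by linarith)
        have h5 : (0:ℝ) ≤ t * ((j:ℝ) + 1) := mul_nonneg ht (by linarith)
        simp; linarith
end
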